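/- Let Λ ≤ Γ be a finite index subgroup, A a finite abelian group, and α ∈ H^2(Γ, A) the class of a central extension 1 → A → Γ̃ → Γ → 1. If Γ is residually finite and Γ̃ is not residually finite, then the image θ^{Γ/Λ}_*(α) ∈ H^2(Γ, P^{Γ/Λ}(A)) is nonzero. -/

import Mathlib

/-! ## Inhomogeneous low-degree group cohomology, residual finiteness, and
central extensions -/

/-- `f : G × G → M` is an inhomogeneous 2-cocycle for the action `ρ`. -/
def Is2Cocycle {G M : Type} [Group G] [AddCommGroup M] (ρ : G → M →+ M)
    (f : G → G → M) : Prop :=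
  ∀ g h k : G, ρ g (f h k) - f (g * h) k + f g (h * k) - f g h = 0

/-- `f : G × G → M` is an inhomogeneous 2-coboundary for the action `ρ`. -/
def Is2Cobound {G M : Type} [Group G] [AddCommGroup M] (ρ : G → M →+ M)
    (f : G → G → M) : Prop :=
  ∃ b : G → M, ∀ g h : G, f g h = ρ g (b h) - b (g * h) + b g

/-- A group is residually finite if every nontrivial element survives in some
finite quotient. -/
def ResFin (G : Type) [Group G] : Prop :=
  ∀ g : G, g ≠ 1 → ∃ N : Subgroup G, N.Normal ∧ N.FiniteIndex ∧ g ∉ N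

/-- `IsCentralExtData φ ι s α` records that `1 → A → Γ̃ → Γ → 1` is a central
extension of `Γ` by the abelian group `A` (with quotient map `φ` and central
injection `ι`), together with a set-theoretic section `s` of `φ` whose
associated inhomogeneous 2-cocycle is `α`; thus `α ∈ H^2(Γ, A)` classifies the
extension. -/
structure IsCentralExtData {Γ Γt A : Type} [Group Γ] [Group Γt] [AddCommGroup A]
    (φ : Γt →* Γ) (ι : A → Γt) (s : Γ → Γt) (α : Γ → Γ → A) : Prop where
  surj : Function.Surjective φ
  inj : Function.Injective ι
  hom : ∀ a b : A, ι (a + b) = ι a * ι b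
  range_eq_ker : ∀ x : Γt, φ x = 1 ↔ ∃ a : A, ι a = x
  central : ∀ (a : A) (x : Γt), ι a * x = x * ι a
  section_prop : ∀ g : Γ, φ (s g) = g
  cocycle_eq : ∀ g h : Γ, ι (α g h) = s g * s h * (s (g * h))⁻¹

/-- The coinduced module `P^{Γ/Λ}(A) ≅ map(Γ/Λ, A)` with the translation
action of `Γ`. -/
def rhoCoind {Γ : Type} [Group Γ] (Λ : Subgroup Γ) (A : Type) [AddCommGroup A] :
    Γ → ((Γ ⧸ Λ) → A) →+ ((Γ ⧸ Λ) → A) := fun g =>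
  { toFun := fun f w => f (g⁻¹ • w)
    map_zero' := rfl
    map_add' := fun _ _ => rfl }

/-- Let `Λ ≤ Γ` be of finite index, `A` a finite abelian
group, and `α ∈ H^2(Γ, A)` the class of a central extension
`1 → A → Γ̃ → Γ → 1`.  If `Γ` is residually finite and `Γ̃` is not, then the
image `θ^{Γ/Λ}_*(α) ∈ H^2(Γ, P^{Γ/Λ}(A))` is nonzero, i.e. the pushforward of
the classifying cocycle to the coinduced module is not a coboundary. -/
theorem theta_pushforward_nonzero {Γ Γt A : Type} [Group Γ] [Group Γt]
    [AddCommGroup A] [Finite A] (Λ : Subgroup Γ) [Λ.FiniteIndex]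
    (φ : Γt →* Γ) (ι : A → Γt) (s : Γ → Γt) (α : Γ → Γ → A)
    (hext : IsCentralExtData φ ι s α)
    (hΓ : ResFin Γ) (hΓt : ¬ ResFin Γt) :
    ¬ Is2Cobound (rhoCoind Λ A)
        (fun g h => (fun _ : Γ ⧸ Λ => α g h)) := by
  intro hcob
  refine hΓt ?_
  obtain ⟨b, hb⟩ := hcob
  have ι_zero : ι 0 = 1 := by
    have h0 := hext.hom 0 0
    rw [add_zero] at h0
    exact left_eq_mul.mp h0
  have ι_neg : ∀ a : A, ι (-a) = (ι a)⁻¹ := fun a =>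
    eq_inv_of_mul_eq_one_left (by rw [← hext.hom, neg_add_cancel, ι_zero])
  have φι : ∀ c : A, φ (ι c) = 1 := fun c => (hext.range_eq_ker (ι c)).mpr ⟨c, rfl⟩
  set β : Γ → A := fun g => b g ((1 : Γ) : Γ ⧸ Λ) with hβdef
  have hres : ∀ g ∈ Λ, ∀ h : Γ, α g h = β h - β (g * h) + β g := by
    intro g hg h
    have h1 := congrFun (hb g h) ((1 : Γ) : Γ ⧸ Λ)
    have h2 : g⁻¹ • ((1 : Γ) : Γ ⧸ Λ) = ((1 : Γ) : Γ ⧸ Λ) := by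
      rw [MulAction.Quotient.smul_mk]
      exact QuotientGroup.eq.mpr (by simpa using hg)
    simpa [rhoCoind, h2] using h1
  set σ : Γ → Γt := fun g => (ι (β g))⁻¹ * s g with hσdef
  have φσ : ∀ g : Γ, φ (σ g) = g := by
    intro g
    simp [hσdef, φι, hext.section_prop]
  have s_mul : ∀ g h : Γ, s g * s h = ι (α g h) * s (g * h) := by
    intro g h
    rw [hext.cocycle_eq]
    group
  have σ_mul : ∀ g ∈ Λ, ∀ h : Γ, σ g * σ h = σ (g * h) := by
    intro g hg h
    have hc : s g * (ι (β h))⁻¹ = (ι (β h))⁻¹ * s g := by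
      rw [← ι_neg, ← hext.central]
    calc σ g * σ h = (ι (β g))⁻¹ * (s g * (ι (β h))⁻¹ * s h) := by
          simp [hσdef, mul_assoc]
      _ = (ι (β g))⁻¹ * ((ι (β h))⁻¹ * (s g * s h)) := by rw [hc, mul_assoc]
      _ = (ι (β g))⁻¹ * ((ι (β h))⁻¹ * (ι (α g h) * s (g * h))) := by rw [s_mul]
      _ = ι (-β g) * (ι (-β h) * (ι (α g h) * s (g * h))) := by rw [ι_neg, ι_neg]
      _ = ι (-β g + (-β h + α g h)) * s (g * h) := by
          rw [hext.hom, hext.hom, mul_assoc, mul_assoc]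
      _ = ι (-β (g * h)) * s (g * h) := by
          rw [hres g hg h]; abel_nf
      _ = σ (g * h) := by rw [ι_neg]
  have σ_one : σ 1 = 1 := by
    have hβ1 : β 1 = α 1 1 := by
      have := hres 1 (one_mem Λ) 1
      rw [one_mul] at this
      rw [this]; abel
    have hs1 : s 1 = ι (α 1 1) := by
      have := hext.cocycle_eq 1 1
      rw [one_mul, mul_inv_cancel_right] at this
      exact this.symm
    rw [hσdef]
    simp only [hβ1, hs1, inv_mul_cancel]
  have hψex : ∀ x : Γt, ∃ a : A, ι a = x * (σ (φ x))⁻¹ := by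
    intro x
    refine (hext.range_eq_ker _).mp ?_
    rw [map_mul, map_inv, φσ, mul_inv_cancel]
  choose ψ hψ using hψex
  have ψι : ∀ a : A, ψ (ι a) = a := by
    intro a
    apply hext.inj
    rw [hψ, φι, σ_one, inv_one, mul_one]
  have ψ_one : ψ 1 = 0 := by
    rw [← ι_zero, ψι]
  have ψ_hom : ∀ x y : Γt, φ x ∈ Λ → ψ (x * y) = ψ x + ψ y := by
    intro x y hx
    apply hext.inj
    rw [hext.hom, hψ, hψ, hψ, map_mul, ← σ_mul (φ x) hx (φ y), mul_inv_rev]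
    have h2 : y * (σ (φ y))⁻¹ = ι (ψ y) := (hψ y).symm
    calc x * y * ((σ (φ y))⁻¹ * (σ (φ x))⁻¹)
        = x * (y * (σ (φ y))⁻¹) * (σ (φ x))⁻¹ := by group
      _ = x * ι (ψ y) * (σ (φ x))⁻¹ := by rw [h2]
      _ = x * ((σ (φ x))⁻¹ * ι (ψ y)) := by
          rw [mul_assoc, ← hext.central]
      _ = x * (σ (φ x))⁻¹ * (y * (σ (φ y))⁻¹) := by rw [h2, mul_assoc]
  set K : Subgroup Γt :=
    { carrier := {x : Γt | φ x ∈ Λ ∧ ψ x = 0}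
      one_mem' := ⟨by simp [one_mem], ψ_one⟩
      mul_mem' := by
        rintro x y ⟨hx1, hx2⟩ ⟨hy1, hy2⟩
        exact ⟨by rw [map_mul]; exact mul_mem hx1 hy1,
          by rw [ψ_hom x y hx1, hx2, hy2, add_zero]⟩
      inv_mem' := by
        rintro x ⟨hx1, hx2⟩
        refine ⟨by rw [map_inv]; exact inv_mem hx1, ?_⟩
        have := ψ_hom x x⁻¹ hx1
        rw [mul_inv_cancel, ψ_one, hx2, zero_add] at this
        exact this.symm } with hKdef
  have hKmem : ∀ x : Γt, x ∈ K ↔ φ x ∈ Λ ∧ ψ x = 0 := fun x => Iff.rfl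
  set Λt : Subgroup Γt := Λ.comap φ with hΛtdef
  have hKle : K ≤ Λt := fun x hx => hx.1
  have hΛtidx : Λt.index ≠ 0 := by
    rw [hΛtdef, Subgroup.index_comap_of_surjective _ hext.surj]
    exact Subgroup.FiniteIndex.index_ne_zero
  set F : Λt →* Multiplicative A :=
    { toFun := fun x => Multiplicative.ofAdd (ψ x.1)
      map_one' := by simp [ψ_one]
      map_mul' := by
        rintro ⟨x, hx⟩ ⟨y, hy⟩
        show Multiplicative.ofAdd (ψ (x * y)) = _
        rw [ψ_hom x y hx, ofAdd_add] } with hFdef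
  have hker : K.subgroupOf Λt = F.ker := by
    ext x
    simp only [Subgroup.mem_subgroupOf, hKmem, MonoidHom.mem_ker, hFdef,
      MonoidHom.coe_mk, OneHom.coe_mk, ofAdd_eq_one]
    exact ⟨fun h => h.2, fun h => ⟨x.2, h⟩⟩
  have hKidx : K.index ≠ 0 := by
    rw [← Subgroup.relIndex_mul_index hKle]
    refine Nat.mul_ne_zero ?_ hΛtidx
    have : K.relIndex Λt = F.ker.index := by rw [Subgroup.relIndex, hker]
    rw [this]
    exact Subgroup.FiniteIndex.index_ne_zero
  haveI : K.FiniteIndex := ⟨hKidx⟩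
  intro x hx
  by_cases hfx : φ x = 1
  · obtain ⟨a, ha⟩ := (hext.range_eq_ker x).mp hfx
    have ha0 : a ≠ 0 := fun h => hx (by rw [← ha, h, ι_zero])
    refine ⟨K.normalCore, inferInstance, inferInstance, fun hmem => ?_⟩
    have hxK := K.normalCore_le hmem
    exact ha0 (by rw [← ψι a, ha]; exact ((hKmem x).mp hxK).2)
  · obtain ⟨N, hN, hNfi, hxN⟩ := hΓ (φ x) hfx
    refine ⟨N.comap φ, hN.comap φ, ⟨?_⟩, fun h => hxN h⟩
    rw [Subgroup.index_comap_of_surjective _ hext.surj]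
    exact hNfi.index_ne_zero
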